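/- Let I ⊆ ℤ[ξ_p] be a nonzero ideal, stable under multiplication by ξ_p. The inclusion I ↪ ℤ[ξ_p] induces a surjective C_p-equivariant homomorphism of tori (ℝ ⊗_ℤ I)/I → (ℝ ⊗_ℤ ℤ[ξ_p])/ℤ[ξ_p] with finite kernel; hence the corresponding semidirect products satisfy G_I / Ker ≅ G_{ℤ[ξ_p]} ≅ Γ_p, i.e., Γ_p is a quotient of G_I by a finite normal subgroup. -/

import Mathlib

open TensorProduct

/-- `ξ_p = exp(2πi/p)`. -/
noncomputable def zetaC (p : ℕ) : ℂ := Complex.exp (2 * Real.pi * Complex.I / p)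

/-- The lattice `M ≤ ℝ ⊗_ℤ M`, i.e. the image of `x ↦ 1 ⊗ x`. -/
noncomputable def lattice (M : Type*) [AddCommGroup M] :
    AddSubgroup (ℝ ⊗[ℤ] M) :=
  (LinearMap.range ((TensorProduct.mk ℤ ℝ M) 1)).toAddSubgroup

set_option maxHeartbeats 2000000 in
/-- Let `R ≅ ℤ[ξ_p]` be the ring of integers of the `p`-th cyclotomic field
(a commutative ring with an injective ring homomorphism `ι` onto the subring
`ℤ[ξ_p] = Algebra.adjoin ℤ {ξ_p}` of `ℂ`, with `ζR` corresponding to `ξ_p`), and let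
`I ⊆ R` be a nonzero ideal (automatically stable under multiplication by `ξ_p`).
Let `fbar : (ℝ ⊗_ℤ I)/I → (ℝ ⊗_ℤ R)/R` be the map of tori induced by the inclusion
`I ↪ R` (hypothesis `hfbar`, with `F` the base change of the inclusion to `ℝ`), and let
`μI, μR` be the maps of the tori induced by multiplication by `ξ_p` (the action of the
generator of `C_p`; hypotheses `hμI`, `hμR`).  Then `fbar` is surjective, has finite
kernel, and is `C_p`-equivariant; hence for the corresponding semidirect products
`G_I = T_I ⋊ C_p` and `G_R = T_R ⋊ C_p ≅ Γ_p` (with `C_p` acting through `μI` resp.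
`μR`; hypotheses `hφI`, `hφR`) there is a surjective homomorphism `q : G_I → G_R ≅ Γ_p`
with finite kernel, extending `fbar` and inducing the identity on `C_p`: `Γ_p` is the
quotient of `G_I` by the finite normal subgroup `Ker q`. -/
theorem stmt_12 (p : ℕ) (hp : p.Prime)
    (R : Type) [CommRing R] (ι : R →+* ℂ) (hι : Function.Injective ι)
    (hrange : Set.range ι = (Algebra.adjoin ℤ ({zetaC p} : Set ℂ) : Set ℂ))
    (ζR : R) (hζ : ι ζR = zetaC p)
    (I : Ideal R) (hI : I ≠ ⊥)
    (F : (ℝ ⊗[ℤ] I) →ₗ[ℝ] (ℝ ⊗[ℤ] R))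
    (hF : F = LinearMap.baseChange ℝ ((Submodule.subtype I).restrictScalars ℤ))
    (mI : I →ₗ[ℤ] I) (hmI : mI = ((LinearMap.lsmul R I) ζR).restrictScalars ℤ)
    (mR : R →ₗ[ℤ] R) (hmR : mR = ((LinearMap.lsmul R R) ζR).restrictScalars ℤ)
    (fbar : (ℝ ⊗[ℤ] I) ⧸ lattice I →+ (ℝ ⊗[ℤ] R) ⧸ lattice R)
    (hfbar : ∀ x : ℝ ⊗[ℤ] I,
      fbar (QuotientAddGroup.mk' (lattice I) x) = QuotientAddGroup.mk' (lattice R) (F x))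
    (μI : (ℝ ⊗[ℤ] I) ⧸ lattice I →+ (ℝ ⊗[ℤ] I) ⧸ lattice I)
    (hμI : ∀ x : ℝ ⊗[ℤ] I,
      μI (QuotientAddGroup.mk' (lattice I) x) =
        QuotientAddGroup.mk' (lattice I) (LinearMap.baseChange ℝ mI x))
    (μR : (ℝ ⊗[ℤ] R) ⧸ lattice R →+ (ℝ ⊗[ℤ] R) ⧸ lattice R)
    (hμR : ∀ y : ℝ ⊗[ℤ] R,
      μR (QuotientAddGroup.mk' (lattice R) y) =
        QuotientAddGroup.mk' (lattice R) (LinearMap.baseChange ℝ mR y))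
    (φI : Multiplicative (ZMod p) →* MulAut (Multiplicative ((ℝ ⊗[ℤ] I) ⧸ lattice I)))
    (hφI : ∀ x, Multiplicative.toAdd (φI (Multiplicative.ofAdd (1 : ZMod p)) x) =
      μI (Multiplicative.toAdd x))
    (φR : Multiplicative (ZMod p) →* MulAut (Multiplicative ((ℝ ⊗[ℤ] R) ⧸ lattice R)))
    (hφR : ∀ y, Multiplicative.toAdd (φR (Multiplicative.ofAdd (1 : ZMod p)) y) =
      μR (Multiplicative.toAdd y)) :
    Function.Surjective fbar
    ∧ Set.Finite {x | fbar x = 0}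
    ∧ (∀ x, fbar (μI x) = μR (fbar x))
    ∧ ∃ q : SemidirectProduct (Multiplicative ((ℝ ⊗[ℤ] I) ⧸ lattice I))
          (Multiplicative (ZMod p)) φI →*
        SemidirectProduct (Multiplicative ((ℝ ⊗[ℤ] R) ⧸ lattice R))
          (Multiplicative (ZMod p)) φR,
        Function.Surjective q ∧ Set.Finite {g | q g = 1} ∧
          (∀ g, (q g).right = g.right) ∧
          (∀ g, Multiplicative.toAdd (q g).left = fbar (Multiplicative.toAdd g.left)) := by

  -- basic instances on `R`
  have hzp : zetaC p ^ p = 1 := by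
    rw [zetaC, ← Complex.exp_nat_mul, mul_comm (p:ℂ), div_mul_cancel₀]
    · exact Complex.exp_two_pi_mul_I
    · exact_mod_cast hp.ne_zero
  have hint : IsIntegral ℤ (zetaC p) := by
    refine ⟨Polynomial.X ^ p - 1, ?_, ?_⟩
    · simpa using Polynomial.monic_X_pow_sub_C (1:ℤ) hp.ne_zero
    · simp [hzp]
  haveI : IsDomain R := hι.isDomain ι
  haveI : CharZero R := ⟨fun m n h => by
    have h2 : (m : ℂ) = n := by
      have h3 := congrArg ι h
      simpa [map_natCast] using h3
    exact_mod_cast h2⟩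
  haveI : NoZeroSMulDivisors ℤ R := inferInstance
  have hmem : ∀ r : R, ι r ∈ Algebra.adjoin ℤ ({zetaC p} : Set ℂ) := by
    intro r
    have h : ι r ∈ Set.range ι := Set.mem_range_self r
    rwa [hrange] at h
  let ι' : R →+* Algebra.adjoin ℤ ({zetaC p} : Set ℂ) :=
    ι.codRestrict (Algebra.adjoin ℤ ({zetaC p} : Set ℂ)).toSubring hmem
  have hbij : Function.Bijective ι' := by
    constructor
    · intro a b h
      exact hι (congrArg Subtype.val h)
    · rintro ⟨x, hx⟩
      have h : x ∈ Set.range ι := by rw [hrange]; exact hx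
      obtain ⟨r, hr⟩ := h
      exact ⟨r, Subtype.ext hr⟩
  let e : R ≃+* Algebra.adjoin ℤ ({zetaC p} : Set ℂ) := RingEquiv.ofBijective ι' hbij
  haveI : Module.Finite ℤ (Algebra.adjoin ℤ ({zetaC p} : Set ℂ)) :=
    Module.Finite.iff_fg.mpr hint.fg_adjoin_singleton
  haveI : Module.Finite ℤ R := Module.Finite.equiv e.symm.toAddEquiv.toIntLinearEquiv
  haveI : Module.Free ℤ R := Module.free_of_finite_type_torsion_free'
  haveI hfinQ : Finite (R ⧸ I) :=
    Ideal.finiteQuotientOfFreeOfNeBot I hI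
  -- a nonzero integer `n` with `n • R ⊆ I`
  obtain ⟨n, hn0, hnI⟩ : ∃ n : ℤ, n ≠ 0 ∧ ∀ r : R, n • r ∈ I := by
    obtain ⟨a, haI, ha0⟩ := Submodule.exists_mem_ne_zero_of_ne_bot hI
    haveI : Algebra.IsIntegral ℤ R := Algebra.IsIntegral.of_finite ℤ R
    obtain ⟨f, hfm, hfa⟩ := Algebra.IsIntegral.isIntegral (R := ℤ) a
    have key : ∀ N (g : Polynomial ℤ), g.natDegree ≤ N → g ≠ 0 → Polynomial.aeval a g = 0 →
        ∃ h : Polynomial ℤ, h.coeff 0 ≠ 0 ∧ Polynomial.aeval a h = 0 := by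
      intro N
      induction N with
      | zero =>
        intro g hd hg0 hga
        exfalso
        obtain ⟨c, hc⟩ := Polynomial.natDegree_eq_zero.mp (Nat.le_zero.mp hd)
        apply hg0
        rw [← hc] at hga ⊢
        rw [Polynomial.aeval_C] at hga
        have hga' : ((c : ℤ) : R) = 0 := by
          rw [← hga]; simp [algebraMap_int_eq, eq_intCast]
        have hc0 : c = 0 := by exact_mod_cast hga'
        rw [hc0, map_zero]
      | succ m ih =>
        intro g hd hg0 hga
        by_cases hc : g.coeff 0 = 0
        · have hgX : g = Polynomial.X * g.divX := by
            conv_lhs => rw [← Polynomial.X_mul_divX_add g, hc]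
            simp
          have hdvx0 : g.divX ≠ 0 := by
            intro h; rw [h, mul_zero] at hgX; exact hg0 hgX
          have hdx : Polynomial.aeval a g.divX = 0 := by
            have h2 := hga
            rw [hgX, map_mul, Polynomial.aeval_X] at h2
            rcases mul_eq_zero.mp h2 with h | h
            · exact absurd h ha0
            · exact h
          refine ih g.divX ?_ hdvx0 hdx
          have h3 := Polynomial.natDegree_divX_eq_natDegree_tsub_one (p := g)
          omega
        · exact ⟨g, hc, hga⟩
    have hfa' : Polynomial.aeval a f = 0 := hfa
    obtain ⟨g, hg0, hga⟩ := key f.natDegree f le_rfl hfm.ne_zero hfa'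
    refine ⟨g.coeff 0, hg0, fun r => ?_⟩
    have hmemI : (algebraMap ℤ R) (g.coeff 0) ∈ I := by
      have h4 : Polynomial.aeval a (Polynomial.X * g.divX) + algebraMap ℤ R (g.coeff 0) = 0 := by
        rw [← Polynomial.aeval_C (R := ℤ) (x := a), ← map_add, Polynomial.X_mul_divX_add, hga]
      have h5 : algebraMap ℤ R (g.coeff 0) = -(a * Polynomial.aeval a g.divX) := by
        rw [map_mul, Polynomial.aeval_X] at h4
        exact eq_neg_of_add_eq_zero_left (by linear_combination h4)
      rw [h5]
      exact neg_mem (Ideal.mul_mem_right _ _ haI)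
    have hmemI' : ((g.coeff 0 : ℤ) : R) ∈ I := hmemI
    simpa [zsmul_eq_mul] using Ideal.mul_mem_right r _ hmemI'
  -- flatness of ℝ over ℤ and bijectivity of `F`
  haveI : Module.Flat ℤ ℝ :=
    have : Module.Flat ℤ ℚ := IsLocalization.flat ℚ (nonZeroDivisors ℤ)
    Module.Flat.trans ℤ ℚ ℝ
  have hFsurj : Function.Surjective F := by
    intro z
    induction z using TensorProduct.induction_on with
    | zero => exact ⟨0, map_zero F⟩
    | tmul s r =>
      refine ⟨(s / (n : ℝ)) ⊗ₜ ⟨n • r, hnI r⟩, ?_⟩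
      rw [hF, LinearMap.baseChange_tmul]
      show (s / (n:ℝ)) ⊗ₜ[ℤ] (n • r) = s ⊗ₜ[ℤ] r
      rw [TensorProduct.tmul_smul, TensorProduct.smul_tmul', zsmul_eq_mul,
        mul_div_cancel₀ s (by exact_mod_cast hn0)]
    | add x y hx hy =>
      obtain ⟨x', hx'⟩ := hx; obtain ⟨y', hy'⟩ := hy
      exact ⟨x' + y', by rw [map_add, hx', hy']⟩
  have hFinj : Function.Injective F := by
    have h := Module.Flat.lTensor_preserves_injective_linearMap (M := ℝ)
      ((Submodule.subtype I).restrictScalars ℤ) Subtype.val_injective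
    rw [hF]
    rw [← LinearMap.baseChange_eq_ltensor] at h
    exact h
  -- surjectivity of `fbar`
  have hsurj : Function.Surjective fbar := by
    intro y
    obtain ⟨z, rfl⟩ := QuotientAddGroup.mk'_surjective (lattice R) y
    obtain ⟨x, rfl⟩ := hFsurj z
    exact ⟨QuotientAddGroup.mk' (lattice I) x, hfbar x⟩
  -- finiteness of the kernel of `fbar`
  have hker : Set.Finite {x | fbar x = 0} := by
    let eF : (ℝ ⊗[ℤ] I) ≃ₗ[ℝ] (ℝ ⊗[ℤ] R) := LinearEquiv.ofBijective F ⟨hFinj, hFsurj⟩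
    let ψ : R → (ℝ ⊗[ℤ] I) ⧸ lattice I :=
      fun r => QuotientAddGroup.mk' (lattice I) (eF.symm ((1:ℝ) ⊗ₜ r))
    have hψI : ∀ r : R, r ∈ I → ψ r = 0 := by
      intro r hr
      have h1 : eF.symm ((1:ℝ) ⊗ₜ r) = (1:ℝ) ⊗ₜ (⟨r, hr⟩ : I) := by
        apply eF.injective
        rw [eF.apply_symm_apply]
        show ((1:ℝ) ⊗ₜ[ℤ] r) = F ((1:ℝ) ⊗ₜ (⟨r, hr⟩ : I))
        rw [hF, LinearMap.baseChange_tmul]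
        rfl
      show QuotientAddGroup.mk' (lattice I) _ = 0
      rw [h1]
      exact (QuotientAddGroup.eq_zero_iff _).mpr ⟨(⟨r, hr⟩ : I), rfl⟩
    have hψwd : ∀ a b : R, a - b ∈ I → ψ a = ψ b := by
      intro a b hab
      have hsub : ψ a - ψ b = ψ (a - b) := by
        have e1 : eF.symm ((1:ℝ) ⊗ₜ a) - eF.symm ((1:ℝ) ⊗ₜ b) = eF.symm ((1:ℝ) ⊗ₜ (a - b)) := by
          rw [TensorProduct.tmul_sub]
          exact (eF.symm.map_sub _ _).symm
        show QuotientAddGroup.mk' _ _ - QuotientAddGroup.mk' _ _ = QuotientAddGroup.mk' _ _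
        rw [← map_sub (QuotientAddGroup.mk' (lattice I)), e1]
      have h0 := hψI _ hab
      rw [← hsub] at h0
      exact sub_eq_zero.mp h0
    let χ : R ⧸ I → (ℝ ⊗[ℤ] I) ⧸ lattice I :=
      fun c => Quotient.liftOn' c ψ (fun a b h => hψwd a b
        (by rwa [Submodule.quotientRel_def] at h))
    have hsubset : {x | fbar x = 0} ⊆ Set.range χ := by
      intro t ht
      obtain ⟨x, rfl⟩ := QuotientAddGroup.mk'_surjective (lattice I) t
      rw [Set.mem_setOf_eq, hfbar] at ht
      have hx : F x ∈ lattice R := (QuotientAddGroup.eq_zero_iff _).mp ht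
      obtain ⟨r, hr⟩ := hx
      refine ⟨Submodule.Quotient.mk r, ?_⟩
      show ψ r = _
      have h2 : eF.symm ((1:ℝ) ⊗ₜ r) = x := by
        have h3 : ((1:ℝ) ⊗ₜ[ℤ] r) = F x := hr
        rw [h3]
        exact eF.symm_apply_apply x
      show QuotientAddGroup.mk' (lattice I) _ = _
      rw [h2]
    exact Set.Finite.subset (Set.finite_range χ) hsubset
  -- equivariance
  have hcomm : ∀ x, fbar (μI x) = μR (fbar x) := by
    have hFmaps : F.comp (LinearMap.baseChange ℝ mI) = (LinearMap.baseChange ℝ mR).comp F := by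
      rw [hF, hmI, hmR, ← LinearMap.baseChange_comp, ← LinearMap.baseChange_comp]
      congr 1
    intro x
    obtain ⟨y, rfl⟩ := QuotientAddGroup.mk'_surjective (lattice I) x
    rw [hμI, hfbar, hfbar, hμR]
    exact congrArg _ (LinearMap.congr_fun hFmaps y)
  refine ⟨hsurj, hker, hcomm, ?_⟩
  -- the semidirect product homomorphism
  haveI : NeZero p := ⟨hp.ne_zero⟩
  set g₀ : Multiplicative (ZMod p) := Multiplicative.ofAdd (1 : ZMod p) with hg₀
  have hpow : ∀ (k : ℕ) (x : Multiplicative ((ℝ ⊗[ℤ] I) ⧸ lattice I)),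
      fbar (Multiplicative.toAdd ((φI g₀ ^ k) x)) =
        Multiplicative.toAdd
          ((φR g₀ ^ k) (Multiplicative.ofAdd (fbar (Multiplicative.toAdd x)))) := by
    intro k
    induction k with
    | zero => intro x; simp
    | succ k ih =>
      intro x
      rw [pow_succ', MulAut.mul_apply, pow_succ', MulAut.mul_apply]
      rw [hφI, hcomm, ih, hφR]
  have hφcomm : ∀ g : Multiplicative (ZMod p),
      (AddMonoidHom.toMultiplicative fbar).comp (φI g).toMonoidHom =
        ((φR g).toMonoidHom).comp (AddMonoidHom.toMultiplicative fbar) := by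
    intro g
    have hg : g = g₀ ^ (Multiplicative.toAdd g).val := by
      apply Multiplicative.toAdd.injective
      simp [hg₀, toAdd_pow, nsmul_eq_mul, ZMod.natCast_val, ZMod.cast_id]
    refine MonoidHom.ext fun x => ?_
    show Multiplicative.ofAdd (fbar (Multiplicative.toAdd ((φI g) x))) =
      (φR g) (Multiplicative.ofAdd (fbar (Multiplicative.toAdd x)))
    rw [hg, map_pow, map_pow, hpow, ofAdd_toAdd]
  refine ⟨SemidirectProduct.map (AddMonoidHom.toMultiplicative fbar) (MonoidHom.id _) hφcomm,
    ?_, ?_, fun g => rfl, fun g => rfl⟩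
  · rintro ⟨l, r⟩
    obtain ⟨x, hx⟩ := hsurj (Multiplicative.toAdd l)
    refine ⟨⟨Multiplicative.ofAdd x, r⟩, ?_⟩
    ext
    · show Multiplicative.ofAdd (fbar x) = l
      rw [hx]
      rfl
    · rfl
  · apply Set.Finite.of_finite_image (f := fun g => Multiplicative.toAdd g.left)
    · apply Set.Finite.subset hker
      rintro b ⟨g, hg, rfl⟩
      have h1 : (SemidirectProduct.map (AddMonoidHom.toMultiplicative fbar)
          (MonoidHom.id _) hφcomm g).left = 1 := by rw [hg]; rfl
      exact (Multiplicative.ofAdd.injective (a₂ := Multiplicative.ofAdd 0) h1 : _)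
    · rintro g hg g' hg' h
      have h1 : g.left = g'.left := Multiplicative.toAdd.injective h
      have h2 : g.right = g'.right := by
        have e1 : g.right = 1 := congrArg SemidirectProduct.right hg
        have e2 : g'.right = 1 := congrArg SemidirectProduct.right hg'
        rw [e1, e2]
      cases g; cases g'
      simp_all
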